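/- arXiv:2109.12444 — 2 statements merged into one kernel-verified Lean document; each statement's English description precedes it below -/
import Mathlib

section
/- Let L be a Lie hyperalgebra over a hyperfield F with char(F/α*) ≠ 2. For any x, y ∈ L with x, y ∈ L^{[n-1]}, the classes commute in the quotient: ⌊S_n*(x), S_n*(y)⌋ = ⌊S_n*(y), S_n*(x)⌋ in L/S_n*. Consequently (L/S_n*)^{(n-1)} is abelian. -/
def ext2 {α : Type*} (f : α → α → Set α) (A B : Set α) : Set α :=
  ⋃ a ∈ A, ⋃ b ∈ B, f a b

def IsSemihypergroup {α : Type*} (f : α → α → Set α) : Prop :=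
  (∀ a b, (f a b).Nonempty) ∧ ∀ a b c, ext2 f (f a b) {c} = ext2 f {a} (f b c)

def IsHypergroup {α : Type*} (f : α → α → Set α) : Prop :=
  IsSemihypergroup f ∧ ∀ a, (⋃ b, f a b) = Set.univ ∧ (⋃ b, f b a) = Set.univ

structure LieHyperalgebra (F : Type*) (L : Type*) where
  fadd : F → F → Set F
  fmul : F → F → Set F
  fzero : F
  fone : F
  add : L → L → Set L
  smul : F → L → Set L
  zero : L
  bracket : L → L → Set L
  fadd_hypergroup : IsHypergroup fadd
  fmul_semihypergroup : IsSemihypergroup fmul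
  fmul_repro : ∀ a, a ≠ fzero → ∀ c, c ≠ fzero → (∃ b, c ∈ fmul a b) ∧ (∃ b, c ∈ fmul b a)
  fdistrib_left : ∀ a b c, (⋃ x ∈ fadd b c, fmul a x) = ext2 fadd (fmul a b) (fmul a c)
  fdistrib_right : ∀ a b c, (⋃ x ∈ fadd a b, fmul x c) = ext2 fadd (fmul a c) (fmul b c)
  add_hypergroup : IsHypergroup add
  smul_add : ∀ (a : F) (x y : L), (⋃ z ∈ add x y, smul a z) = ext2 add (smul a x) (smul a y)
  add_smul : ∀ (a b : F) (x : L), (⋃ c ∈ fadd a b, smul c x) = ext2 add (smul a x) (smul b x)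
  mul_smul : ∀ (a b : F) (x : L), (⋃ c ∈ fmul a b, smul c x) = ⋃ y ∈ smul b x, smul a y
  zero_smul : ∀ x, smul fzero x = {zero}
  one_smul : ∀ x, smul fone x = {x}
  bracket_bilin_left : ∀ (l1 l2 : F) (x1 x2 y : L),
    ext2 bracket (ext2 add (smul l1 x1) (smul l2 x2)) {y}
      = ext2 add (⋃ z ∈ bracket x1 y, smul l1 z) (⋃ z ∈ bracket x2 y, smul l2 z)
  bracket_bilin_right : ∀ (l1 l2 : F) (x y1 y2 : L),
    ext2 bracket {x} (ext2 add (smul l1 y1) (smul l2 y2))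
      = ext2 add (⋃ z ∈ bracket x y1, smul l1 z) (⋃ z ∈ bracket x y2, smul l2 z)
  bracket_refl : ∀ x, zero ∈ bracket x x
  jacobi : ∀ x y z, zero ∈ ext2 add
    (ext2 add (ext2 bracket {x} (bracket y z)) (ext2 bracket {y} (bracket z x)))
    (ext2 bracket {z} (bracket x y))

/-- Hypersum `A 0 + A 1 + ⋯ + A t` of finitely many sets w.r.t. a hyperoperation. -/
def hsumSet {α : Type*} (f : α → α → Set α) : ∀ {t : ℕ}, (Fin (t + 1) → Set α) → Set α
  | 0, A => A 0
  | _ + 1, A => ext2 f (A 0) (hsumSet f (A ∘ Fin.succ))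

/-- Hyperproduct `lam 0 · lam 1 ⋯ · lam q` of finitely many elements. -/
def hprod {α : Type*} (f : α → α → Set α) : ∀ {q : ℕ}, (Fin (q + 1) → α) → Set α
  | 0, lam => {lam 0}
  | _ + 1, lam => ext2 f {lam 0} (hprod f (lam ∘ Fin.succ))

/-- Formal hyperbracket expressions in `m` variables: arbitrary compositions of the
arguments using only the hyperbracket. -/
inductive BExpr : ℕ → Type
  | leaf {m : ℕ} : Fin m → BExpr m
  | br {m : ℕ} : BExpr m → BExpr m → BExpr m

namespace LieHyperalgebra

variable {F L : Type*} (H : LieHyperalgebra F L)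

def derivedSet : ℕ → Set L
  | 0 => Set.univ
  | i + 1 => ext2 H.bracket (derivedSet i) (derivedSet i)

/-- Evaluation of a hyperbracket expression on set-valued arguments. -/
def evalBExpr : ∀ {m : ℕ}, BExpr m → (Fin m → Set L) → Set L
  | _, .leaf j, g => g j
  | _, .br e₁ e₂, g => ext2 H.bracket (evalBExpr e₁ g) (evalBExpr e₂ g)

/-- The data occurring in the definition of the relation `𝒮ₙ`. -/
structure SData (n : ℕ) where
  t : ℕ
  σ : Equiv.Perm (Fin (t + 1))
  m : Fin (t + 1) → ℕ
  f : ∀ i, BExpr (m i + 1)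
  h : ∀ i, Fin (m i + 1) → L
  p : ∀ i, Fin (m i + 1) → ℕ
  q : ∀ i j, Fin (p i j + 1) → ℕ
  lam : ∀ i j k, Fin (q i j k + 1) → F
  σi : ∀ i, Equiv.Perm (Fin (m i + 1))
  σi_fix : ∀ i j, h i j ∉ H.derivedSet (n - 1) → σi i j = j
  σij : ∀ i j, Equiv.Perm (Fin (p i j + 1))
  σijk : ∀ i j k, Equiv.Perm (Fin (q i j k + 1))

namespace SData

variable {H} {n : ℕ} (d : SData H n)

/-- `g_{ij} = (Σ_k Π_r λ_{ijkr}) · h_{ij}`. -/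
def g (i : Fin (d.t + 1)) (j : Fin (d.m i + 1)) : Set L :=
  ⋃ c ∈ hsumSet H.fadd (fun k => hprod H.fmul (d.lam i j k)), H.smul c (d.h i j)

/-- `A_{ij} = Σ_k B_{ij σ_{ij}(k)}` with `B_{ijk} = Π_r λ_{ijk σ_{ijk}(r)}`. -/
def A (i : Fin (d.t + 1)) (j : Fin (d.m i + 1)) : Set F :=
  hsumSet H.fadd (fun k =>
    hprod H.fmul (fun r => d.lam i j (d.σij i j k) (d.σijk i j (d.σij i j k) r)))

/-- `g'_{ij} = A_{σ(i) σ_{σ(i)}(j)} · h_{σ(i) σ_{σ(i)}(j)}`. -/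
def g' (i : Fin (d.t + 1)) (j : Fin (d.m (d.σ i) + 1)) : Set L :=
  ⋃ c ∈ d.A (d.σ i) (d.σi (d.σ i) j), H.smul c (d.h (d.σ i) (d.σi (d.σ i) j))

/-- `Σ_i ℓ_i` where `ℓ_i = f_i(g_{i1},…,g_{im_i})`. -/
def lhs : Set L := hsumSet H.add (fun i => H.evalBExpr (d.f i) (d.g i))

/-- `Σ_i ℓ'_i` where `ℓ'_i = f_{σ(i)}(g'_{i1},…,g'_{im_{σ(i)}})`. -/
def rhs : Set L := hsumSet H.add (fun i => H.evalBExpr (d.f (d.σ i)) (d.g' i))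

end SData

/-- The relation `𝒮ₙ` on a Lie hyperalgebra. -/
def SRel (n : ℕ) (x y : L) : Prop := ∃ d : SData H n, x ∈ d.lhs ∧ y ∈ d.rhs

/-- Data for the relation `𝒜` (no restriction on the permutations `σᵢ`). -/
structure AData (F L : Type*) where
  t : ℕ
  σ : Equiv.Perm (Fin (t + 1))
  m : Fin (t + 1) → ℕ
  f : ∀ i, BExpr (m i + 1)
  h : ∀ i, Fin (m i + 1) → L
  p : ∀ i, Fin (m i + 1) → ℕ
  q : ∀ i j, Fin (p i j + 1) → ℕ
  lam : ∀ i j k, Fin (q i j k + 1) → F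
  σi : ∀ i, Equiv.Perm (Fin (m i + 1))
  σij : ∀ i j, Equiv.Perm (Fin (p i j + 1))
  σijk : ∀ i j k, Equiv.Perm (Fin (q i j k + 1))

variable {H}

def aG (d : AData F L) (i : Fin (d.t + 1)) (j : Fin (d.m i + 1)) : Set L :=
  ⋃ c ∈ hsumSet H.fadd (fun k => hprod H.fmul (d.lam i j k)), H.smul c (d.h i j)

def aA (d : AData F L) (i : Fin (d.t + 1)) (j : Fin (d.m i + 1)) : Set F :=
  hsumSet H.fadd (fun k =>
    hprod H.fmul (fun r => d.lam i j (d.σij i j k) (d.σijk i j (d.σij i j k) r)))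

def aG' (d : AData F L) (i : Fin (d.t + 1)) (j : Fin (d.m (d.σ i) + 1)) : Set L :=
  ⋃ c ∈ aA (H := H) d (d.σ i) (d.σi (d.σ i) j), H.smul c (d.h (d.σ i) (d.σi (d.σ i) j))

def aLhs (d : AData F L) : Set L :=
  hsumSet H.add (fun i => H.evalBExpr (d.f i) (aG (H := H) d i))

def aRhs (d : AData F L) : Set L :=
  hsumSet H.add (fun i => H.evalBExpr (d.f (d.σ i)) (aG' (H := H) d i))

variable (H)

/-- The relation `𝒜` on a Lie hyperalgebra. -/
def ARel (x y : L) : Prop :=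
  ∃ d : AData F L, x ∈ aLhs (H := H) d ∧ y ∈ aRhs (H := H) d

/-- Data for the fundamental relation `ℒ`. -/
structure LData (F L : Type*) where
  t : ℕ
  m : Fin (t + 1) → ℕ
  f : ∀ i, BExpr (m i + 1)
  h : ∀ i, Fin (m i + 1) → L
  p : ∀ i, Fin (m i + 1) → ℕ
  q : ∀ i j, Fin (p i j + 1) → ℕ
  lam : ∀ i j k, Fin (q i j k + 1) → F

variable {H}

def lG (d : LData F L) (i : Fin (d.t + 1)) (j : Fin (d.m i + 1)) : Set L :=
  ⋃ c ∈ hsumSet H.fadd (fun k => hprod H.fmul (d.lam i j k)), H.smul c (d.h i j)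

def lLhs (d : LData F L) : Set L :=
  hsumSet H.add (fun i => H.evalBExpr (d.f i) (lG (H := H) d i))

variable (H)

/-- The fundamental relation `ℒ`: `x ℒ y` iff `{x,y} ⊆ Σ ℓᵢ`. -/
def LRel (x y : L) : Prop := ∃ d : LData F L, x ∈ lLhs (H := H) d ∧ y ∈ lLhs (H := H) d

/-- Data for the relation `α` on the hyperfield `F`. -/
structure AlphaData (F : Type*) where
  t : ℕ
  σ : Equiv.Perm (Fin (t + 1))
  k : Fin (t + 1) → ℕ
  σi : ∀ i, Equiv.Perm (Fin (k i + 1))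
  xs : ∀ i, Fin (k i + 1) → F

/-- The relation `α` on the hyperfield `F`. -/
def alphaRel (a b : F) : Prop :=
  ∃ d : AlphaData F,
    a ∈ hsumSet H.fadd (fun i => hprod H.fmul (d.xs i)) ∧
    b ∈ hsumSet H.fadd (fun i => hprod H.fmul (fun j => d.xs (d.σ i) (d.σi (d.σ i) j)))

/-- `A ρ̄̄ B` : every element of `A` is related to every element of `B`. -/
def SetRel {α : Type*} (ρ : α → α → Prop) (A B : Set α) : Prop :=
  ∀ a ∈ A, ∀ b ∈ B, ρ a b

/-- A strongly regular relation on a Lie hyperalgebra. -/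
structure IsStronglyRegular (ρ : L → L → Prop) : Prop where
  add_left : ∀ x y a, ρ x y → SetRel ρ (H.add a x) (H.add a y)
  add_right : ∀ x y a, ρ x y → SetRel ρ (H.add x a) (H.add y a)
  smul : ∀ x y (c : F), ρ x y → SetRel ρ (H.smul c x) (H.smul c y)
  bracket_left : ∀ x y a, ρ x y → SetRel ρ (H.bracket a x) (H.bracket a y)
  bracket_right : ∀ x y a, ρ x y → SetRel ρ (H.bracket x a) (H.bracket y a)

/-- A strongly regular relation on the hyperfield `F`. -/
structure IsStronglyRegularF (δ : F → F → Prop) : Prop where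
  add_left : ∀ x y a, δ x y → SetRel δ (H.fadd a x) (H.fadd a y)
  add_right : ∀ x y a, δ x y → SetRel δ (H.fadd x a) (H.fadd y a)
  mul_left : ∀ x y a, δ x y → SetRel δ (H.fmul a x) (H.fmul a y)
  mul_right : ∀ x y a, δ x y → SetRel δ (H.fmul x a) (H.fmul y a)

end LieHyperalgebra


section Aux

variable {F L : Type*}

theorem LieHyperalgebra.bracket_nonempty (H : LieHyperalgebra F L)
    (x y : L) : (H.bracket x y).Nonempty := by
  obtain ⟨w, hw⟩ : ∃ w, y ∈ H.add x w := by
    have h := (H.add_hypergroup.2 x).1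
    have : y ∈ (⋃ b, H.add x b) := h ▸ Set.mem_univ y
    simpa using this
  have key := H.bracket_bilin_left H.fone H.fone x w y
  have hmem : H.zero ∈ ext2 H.bracket (ext2 H.add (H.smul H.fone x) (H.smul H.fone w)) {y} := by
    simp only [H.one_smul, ext2, Set.biUnion_singleton, Set.mem_iUnion]
    exact ⟨y, hw, H.bracket_refl y⟩
  rw [key] at hmem
  simp only [ext2, H.one_smul, Set.biUnion_singleton, Set.biUnion_of_singleton,
    Set.mem_iUnion] at hmem
  obtain ⟨a, ha, -⟩ := hmem
  exact ⟨a, ha⟩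

/-- The basic `SData` witness exchanging the two arguments of a single bracket. -/
def LieHyperalgebra.swapData (H : LieHyperalgebra F L) (n : ℕ) (x y : L)
    (hx : x ∈ H.derivedSet (n - 1)) (hy : y ∈ H.derivedSet (n - 1)) :
    H.SData n where
  t := 0
  σ := 1
  m := fun _ => 1
  f := fun _ => .br (.leaf 0) (.leaf 1)
  h := fun _ => ![x, y]
  p := fun _ _ => 0
  q := fun _ _ _ => 0
  lam := fun _ _ _ _ => H.fone
  σi := fun _ => Equiv.swap 0 1
  σi_fix := by
    intro i j hj
    exact absurd (by fin_cases j <;> assumption) hj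
  σij := fun _ _ => 1
  σijk := fun _ _ _ => 1

theorem LieHyperalgebra.srel_of_brackets (H : LieHyperalgebra F L) (n : ℕ) (x y : L)
    (hx : x ∈ H.derivedSet (n - 1)) (hy : y ∈ H.derivedSet (n - 1))
    (u v : L) (hu : u ∈ H.bracket x y) (hv : v ∈ H.bracket y x) :
    H.SRel n u v := by
  refine ⟨H.swapData n x y hx hy, ?_, ?_⟩
  · show u ∈ (H.swapData n x y hx hy).lhs
    simp only [LieHyperalgebra.SData.lhs, LieHyperalgebra.swapData, hsumSet,
      LieHyperalgebra.evalBExpr, LieHyperalgebra.SData.g, hprod, Set.biUnion_singleton,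
      H.one_smul, ext2]
    simpa [Matrix.cons_val_zero, Matrix.cons_val_one] using hu
  · show v ∈ (H.swapData n x y hx hy).rhs
    simp only [LieHyperalgebra.SData.rhs, LieHyperalgebra.swapData, hsumSet,
      LieHyperalgebra.evalBExpr, LieHyperalgebra.SData.g', LieHyperalgebra.SData.A, hprod,
      Set.biUnion_singleton, H.one_smul, ext2, Equiv.Perm.one_apply]
    simpa [Equiv.swap_apply_left, Equiv.swap_apply_right,
      Matrix.cons_val_zero, Matrix.cons_val_one] using hv

end Aux

/-- For a Lie hyperalgebra `L` over a hyperfield `F` with `char(F/α*) ≠ 2`: for any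
`x, y ∈ L^{[n-1]}` the classes commute in the quotient,
`⌊𝒮ₙ*(x), 𝒮ₙ*(y)⌋ = ⌊𝒮ₙ*(y), 𝒮ₙ*(x)⌋`, and consequently `(L/𝒮ₙ*)^{(n-1)}` is abelian. -/
theorem LieHyperalgebra.classes_commute_on_derivedSet {F L : Type*}
    (H : LieHyperalgebra F L) (n : ℕ) (hn : 1 ≤ n)
    [fQ : Field (Quot (Relation.TransGen H.alphaRel))]
    (hfadd : ∀ a b : F, ∀ c ∈ H.fadd a b,
      Quot.mk (Relation.TransGen H.alphaRel) a + Quot.mk (Relation.TransGen H.alphaRel) b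
        = Quot.mk (Relation.TransGen H.alphaRel) c)
    (hfmul : ∀ a b : F, ∀ c ∈ H.fmul a b,
      Quot.mk (Relation.TransGen H.alphaRel) a * Quot.mk (Relation.TransGen H.alphaRel) b
        = Quot.mk (Relation.TransGen H.alphaRel) c)
    (hchar : (2 : Quot (Relation.TransGen H.alphaRel)) ≠ 0)
    [lieRing : LieRing (Quot (Relation.TransGen (H.SRel n)))]
    [module : Module (Quot (Relation.TransGen H.alphaRel))
      (Quot (Relation.TransGen (H.SRel n)))]
    [lieAlg : LieAlgebra (Quot (Relation.TransGen H.alphaRel))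
      (Quot (Relation.TransGen (H.SRel n)))]
    (hadd : ∀ x y : L, ∀ z ∈ H.add x y,
      Quot.mk (Relation.TransGen (H.SRel n)) x + Quot.mk (Relation.TransGen (H.SRel n)) y
        = Quot.mk (Relation.TransGen (H.SRel n)) z)
    (hsmul : ∀ (a : F) (x : L), ∀ z ∈ H.smul a x,
      Quot.mk (Relation.TransGen H.alphaRel) a • Quot.mk (Relation.TransGen (H.SRel n)) x
        = Quot.mk (Relation.TransGen (H.SRel n)) z)
    (hbracket : ∀ x y : L, ∀ z ∈ H.bracket x y,
      ⁅Quot.mk (Relation.TransGen (H.SRel n)) x, Quot.mk (Relation.TransGen (H.SRel n)) y⁆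
        = Quot.mk (Relation.TransGen (H.SRel n)) z)
 :
    (∀ x ∈ H.derivedSet (n - 1), ∀ y ∈ H.derivedSet (n - 1),
      ⁅Quot.mk (Relation.TransGen (H.SRel n)) x, Quot.mk (Relation.TransGen (H.SRel n)) y⁆
        = ⁅Quot.mk (Relation.TransGen (H.SRel n)) y,
            Quot.mk (Relation.TransGen (H.SRel n)) x⁆) ∧
    (∀ u v : Quot (Relation.TransGen (H.SRel n)),
      u ∈ LieAlgebra.derivedSeries (Quot (Relation.TransGen H.alphaRel))
            (Quot (Relation.TransGen (H.SRel n))) (n - 1) →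
      v ∈ LieAlgebra.derivedSeries (Quot (Relation.TransGen H.alphaRel))
            (Quot (Relation.TransGen (H.SRel n))) (n - 1) →
      ⁅u, v⁆ = 0) := by
    classical
  clear hsmul hadd hfadd hfmul
  clear module
  have comm : ∀ x ∈ H.derivedSet (n - 1), ∀ y ∈ H.derivedSet (n - 1),
      ⁅Quot.mk (Relation.TransGen (H.SRel n)) x, Quot.mk (Relation.TransGen (H.SRel n)) y⁆
        = ⁅Quot.mk (Relation.TransGen (H.SRel n)) y,
            Quot.mk (Relation.TransGen (H.SRel n)) x⁆ := by
    intro x hx y hy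
    obtain ⟨u, hu⟩ := H.bracket_nonempty x y
    obtain ⟨v, hv⟩ := H.bracket_nonempty y x
    rw [hbracket x y u hu, hbracket y x v hv]
    exact Quot.sound (Relation.TransGen.single (H.srel_of_brackets n x y hx hy u v hu hv))
  refine ⟨comm, ?_⟩
  have slie : ∀ (c : Quot (Relation.TransGen H.alphaRel))
      (x b : Quot (Relation.TransGen (H.SRel n))), ⁅c • x, b⁆ = c • ⁅x, b⁆ := by
    intro c x b
    rw [← lie_skew, ← lie_skew x b, LieAlgebra.lie_smul, smul_neg]
  have half : ∀ w : Quot (Relation.TransGen (H.SRel n)), w = -w → w = 0 := by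
    intro w hw
    have h2 : (2 : Quot (Relation.TransGen H.alphaRel)) • w = 0 := by
      rw [two_smul]
      nth_rewrite 2 [hw]
      exact add_neg_cancel w
    rcases smul_eq_zero.mp h2 with h | h
    · exact absurd h hchar
    · exact h
  set S : ℕ → Set (Quot (Relation.TransGen (H.SRel n))) :=
    fun k => Quot.mk (Relation.TransGen (H.SRel n)) '' H.derivedSet k with hS
  have hbil : ∀ k, ∀ a ∈ Submodule.span (Quot (Relation.TransGen H.alphaRel)) (S k),
      ∀ b ∈ Submodule.span (Quot (Relation.TransGen H.alphaRel)) (S k),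
      ⁅a, b⁆ ∈ Submodule.span (Quot (Relation.TransGen H.alphaRel)) (S (k + 1)) := by
    intro k a ha
    induction ha using Submodule.span_induction with
    | mem x hx =>
      intro b hb
      induction hb using Submodule.span_induction with
      | mem y hy =>
        obtain ⟨x', hx', rfl⟩ := hx
        obtain ⟨y', hy', rfl⟩ := hy
        obtain ⟨u, hu⟩ := H.bracket_nonempty x' y'
        rw [hbracket x' y' u hu]
        refine Submodule.subset_span ⟨u, ?_, rfl⟩
        show u ∈ ext2 H.bracket (H.derivedSet k) (H.derivedSet k)
        simp only [ext2, Set.mem_iUnion]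
        exact ⟨x', hx', y', hy', hu⟩
      | zero => simp
      | add y z hy hz ihy ihz => rw [lie_add]; exact add_mem ihy ihz
      | smul c y hy ihy => rw [LieAlgebra.lie_smul]; exact Submodule.smul_mem _ c ihy
    | zero => intro b hb; simp
    | add x y hx hy ihx ihy =>
      intro b hb
      rw [add_lie]; exact add_mem (ihx b hb) (ihy b hb)
    | smul c x hx ihx =>
      intro b hb
      rw [slie]; exact Submodule.smul_mem _ c (ihx b hb)
  have hder : ∀ k, ∀ u, u ∈ LieAlgebra.derivedSeries (Quot (Relation.TransGen H.alphaRel))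
      (Quot (Relation.TransGen (H.SRel n))) k →
      u ∈ Submodule.span (Quot (Relation.TransGen H.alphaRel)) (S k) := by
    intro k
    induction k with
    | zero =>
      intro u _
      obtain ⟨z, rfl⟩ := Quot.exists_rep u
      exact Submodule.subset_span ⟨z, Set.mem_univ z, rfl⟩
    | succ k ih =>
      intro u hu
      have hstep : LieAlgebra.derivedSeries (Quot (Relation.TransGen H.alphaRel))
          (Quot (Relation.TransGen (H.SRel n))) (k + 1)
          = ⁅LieAlgebra.derivedSeries (Quot (Relation.TransGen H.alphaRel))
              (Quot (Relation.TransGen (H.SRel n))) k,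
             LieAlgebra.derivedSeries (Quot (Relation.TransGen H.alphaRel))
              (Quot (Relation.TransGen (H.SRel n))) k⁆ := by
        rw [LieAlgebra.derivedSeries_def, LieAlgebra.derivedSeriesOfIdeal_succ,
          ← LieAlgebra.derivedSeries_def]
      rw [hstep] at hu
      have hu2 : u ∈ Submodule.span (Quot (Relation.TransGen H.alphaRel))
          {m | ∃ x ∈ LieAlgebra.derivedSeries (Quot (Relation.TransGen H.alphaRel))
                (Quot (Relation.TransGen (H.SRel n))) k,
               ∃ y ∈ LieAlgebra.derivedSeries (Quot (Relation.TransGen H.alphaRel))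
                (Quot (Relation.TransGen (H.SRel n))) k, ⁅x, y⁆ = m} := by
        rw [← LieSubmodule.lieIdeal_oper_eq_linear_span']
        exact hu
      refine Submodule.span_le.mpr ?_ hu2
      rintro m ⟨x, hx, y, hy, rfl⟩
      exact hbil k x (ih x hx) y (ih y hy)
  have commS : ∀ a ∈ Submodule.span (Quot (Relation.TransGen H.alphaRel)) (S (n - 1)),
      ∀ b ∈ Submodule.span (Quot (Relation.TransGen H.alphaRel)) (S (n - 1)),
      ⁅a, b⁆ = ⁅b, a⁆ := by
    intro a ha
    induction ha using Submodule.span_induction with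
    | mem x hx =>
      intro b hb
      induction hb using Submodule.span_induction with
      | mem y hy =>
        obtain ⟨x', hx', rfl⟩ := hx
        obtain ⟨y', hy', rfl⟩ := hy
        exact comm x' hx' y' hy'
      | zero => simp
      | add y z hy hz ihy ihz => simp [lie_add, add_lie, ihy, ihz]
      | smul c y hy ihy => simp [LieAlgebra.lie_smul, slie, ihy]
    | zero => intro b hb; simp
    | add x y hx hy ihx ihy => intro b hb; simp [add_lie, lie_add, ihx b hb, ihy b hb]
    | smul c x hx ihx => intro b hb; simp [slie, LieAlgebra.lie_smul, ihx b hb]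
  intro u v hu hv
  have hu' := hder (n - 1) u hu
  have hv' := hder (n - 1) v hv
  refine half _ ?_
  calc ⁅u, v⁆ = ⁅v, u⁆ := commS u hu' v hv'
    _ = -⁅u, v⁆ := by rw [← neg_neg ⁅v, u⁆, lie_skew]
end

section
/- Let L be a perfect Lie algebra (over a field of characteristic ≠ 2), viewed as a trivial Lie hyperalgebra. Then for every n ≥ 1, S_n* = L × L, hence L/S_n* = 0; moreover the fundamental relation satisfies L-relation = {(x,x) : x ∈ L} and L/L-relation ≅ L. Consequently S = ⋂_n S_n* = L × L and L/S = 0. -/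
/-- The relation `𝒮 = ⋂_{n ≥ 1} 𝒮ₙ*` on a Lie hyperalgebra. -/
def LieHyperalgebra.SInt {F L : Type*} (H : LieHyperalgebra F L) (x y : L) : Prop :=
  ∀ n : ℕ, 1 ≤ n → Relation.TransGen (H.SRel n) x y

section AuxPerfect

open LieHyperalgebra

private lemma aux_ext2_pair {α : Type*} (f : α → α → Set α) (a b : α) :
    ext2 f {a} {b} = f a b := by simp [ext2]

private lemma aux_hsum_val {α : Type*} [AddCommMonoid α] {f : α → α → Set α}
    (hf : ∀ a b : α, f a b = {a + b}) : ∀ {t : ℕ} (A : Fin (t + 1) → Set α)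
    (g : Fin (t + 1) → α), (∀ i, A i = {g i}) → hsumSet f A = {∑ i, g i} := by
  intro t
  induction t with
  | zero =>
    intro A g hA
    have h1 : hsumSet f A = A 0 := rfl
    rw [h1, hA 0]
    simp
  | succ t ih =>
    intro A g hA
    have h1 : hsumSet f A = ext2 f (A 0) (hsumSet f (A ∘ Fin.succ)) := rfl
    rw [h1, hA 0, ih (A ∘ Fin.succ) (g ∘ Fin.succ) (fun i => hA i.succ), aux_ext2_pair, hf]
    have h2 : ∑ i : Fin (t + 1 + 1), g i = g 0 + ∑ i, (g ∘ Fin.succ) i := Fin.sum_univ_succ g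
    rw [h2]

private lemma aux_hprod_sing {α : Type*} {f : α → α → Set α}
    (hf : ∀ a b : α, ∃ c, f a b = {c}) : ∀ {q : ℕ} (g : Fin (q + 1) → α),
    ∃ c, hprod f g = {c} := by
  intro q
  induction q with
  | zero => intro g; exact ⟨g 0, rfl⟩
  | succ q ih =>
    intro g
    obtain ⟨c, hc⟩ := ih (g ∘ Fin.succ)
    have h1 : hprod f g = ext2 f {g 0} (hprod f (g ∘ Fin.succ)) := rfl
    rw [h1, hc, aux_ext2_pair]
    exact hf _ _

private lemma aux_hsum_sing {α : Type*} {f : α → α → Set α}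
    (hf : ∀ a b : α, ∃ c, f a b = {c}) : ∀ {t : ℕ} (A : Fin (t + 1) → Set α),
    (∀ i, ∃ a, A i = {a}) → ∃ s, hsumSet f A = {s} := by
  intro t
  induction t with
  | zero => intro A hA; exact hA 0
  | succ t ih =>
    intro A hA
    obtain ⟨s, hs⟩ := ih (A ∘ Fin.succ) (fun i => hA i.succ)
    obtain ⟨a, ha⟩ := hA 0
    have h1 : hsumSet f A = ext2 f (A 0) (hsumSet f (A ∘ Fin.succ)) := rfl
    rw [h1, ha, hs, aux_ext2_pair]
    exact hf _ _

private lemma aux_eval_sing {F L : Type*} (H : LieHyperalgebra F L)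
    (hf : ∀ a b : L, ∃ c, H.bracket a b = {c}) :
    ∀ {m : ℕ} (e : BExpr m) (g : Fin m → Set L), (∀ j, ∃ a, g j = {a}) →
      ∃ c, H.evalBExpr e g = {c} := by
  intro m e
  induction e with
  | leaf j =>
    intro g hg
    have h0 : H.evalBExpr (BExpr.leaf j) g = g j := by simp [evalBExpr]
    rw [h0]; exact hg j
  | br e₁ e₂ ih₁ ih₂ =>
    intro g hg
    obtain ⟨c₁, h₁⟩ := ih₁ g hg
    obtain ⟨c₂, h₂⟩ := ih₂ g hg
    have h0 : H.evalBExpr (BExpr.br e₁ e₂) g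
        = ext2 H.bracket (H.evalBExpr e₁ g) (H.evalBExpr e₂ g) := by simp [evalBExpr]
    rw [h0, h₁, h₂, aux_ext2_pair]
    exact hf _ _

private lemma aux_bracket_mem_span {K L : Type*} [Field K] [LieRing L] [LieAlgebra K L]
    (S : Set L) (hS : Submodule.span K S = ⊤) (x y : L) :
    ⁅x, y⁆ ∈ Submodule.span K {z : L | ∃ a ∈ S, ∃ b ∈ S, ⁅a, b⁆ = z} := by
  set P := Submodule.span K {z : L | ∃ a ∈ S, ∃ b ∈ S, ⁅a, b⁆ = z} with hP
  have hy : y ∈ Submodule.span K S := by rw [hS]; trivial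
  have key : ∀ a ∈ S, ⁅a, y⁆ ∈ P := by
    intro a ha
    induction hy using Submodule.span_induction with
    | mem b hb => exact Submodule.subset_span ⟨a, ha, b, hb, rfl⟩
    | zero => rw [lie_zero]; exact P.zero_mem
    | add u v _ _ hu hv => rw [lie_add]; exact P.add_mem hu hv
    | smul t u _ hu => rw [lie_smul]; exact P.smul_mem t hu
  have hx : x ∈ Submodule.span K S := by rw [hS]; trivial
  induction hx using Submodule.span_induction with
  | mem a ha => exact key a ha
  | zero => rw [zero_lie]; exact P.zero_mem
  | add u v _ _ hu hv => rw [add_lie]; exact P.add_mem hu hv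
  | smul t u _ hu => rw [smul_lie]; exact P.smul_mem t hu

private lemma aux_span_brackets_eq_top {K L : Type*} [Field K] [LieRing L] [LieAlgebra K L]
    (hperfect : LieAlgebra.derivedSeries K L 1 = ⊤) (S : Set L)
    (hS : Submodule.span K S = ⊤) :
    Submodule.span K {z : L | ∃ a ∈ S, ∃ b ∈ S, ⁅a, b⁆ = z} = ⊤ := by
  rw [eq_top_iff]
  intro w _
  have h1 : (⊤ : LieIdeal K L) = ⁅(⊤ : LieIdeal K L), (⊤ : LieIdeal K L)⁆ := by
    conv_lhs => rw [← hperfect]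
    rw [LieAlgebra.derivedSeries_def, LieAlgebra.derivedSeriesOfIdeal_succ,
      LieAlgebra.derivedSeriesOfIdeal_zero]
  have h2 : w ∈ Submodule.span K
      {m : L | ∃ x ∈ (⊤ : LieIdeal K L), ∃ n ∈ (⊤ : LieIdeal K L), ⁅x, n⁆ = m} := by
    rw [← LieSubmodule.lieIdeal_oper_eq_linear_span']
    have hw : w ∈ (⊤ : LieIdeal K L) := trivial
    rw [h1] at hw
    exact hw
  refine Submodule.span_le.mpr ?_ h2
  rintro m ⟨u, -, v, -, rfl⟩
  exact aux_bracket_mem_span S hS u v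

/-! Concrete `SData` witnessing `S_n`-relatedness of `e + z` and `e - z`. -/

private def auxF (N : ℕ) : Fin (N + 2) → BExpr 2 :=
  Fin.cases (BExpr.leaf 0) fun _ => BExpr.br (BExpr.leaf 0) (BExpr.leaf 1)

private def auxH {L : Type*} [LieRing L] (e : L) {N : ℕ} (a b : Fin (N + 1) → L) :
    Fin (N + 2) → Fin 2 → L :=
  Fin.cases ![e, 0] fun j => ![a j, b j]

private def auxLam {K : Type*} [Field K] {N : ℕ} (c : Fin (N + 1) → K) :
    Fin (N + 2) → Fin 2 → K :=
  Fin.cases (fun _ => 1) fun j jj => if jj = 0 then c j else 1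

private def auxSigma (N : ℕ) : Fin (N + 2) → Equiv.Perm (Fin 2) :=
  Fin.cases (Equiv.refl _) fun _ => Equiv.swap 0 1

private def auxData {K L : Type*} [Field K] [LieRing L] [LieAlgebra K L]
    (H : LieHyperalgebra K L) (n : ℕ) (e : L) {N : ℕ} (c : Fin (N + 1) → K)
    (a b : Fin (N + 1) → L) (ha : ∀ j, a j ∈ H.derivedSet (n - 1))
    (hb : ∀ j, b j ∈ H.derivedSet (n - 1)) : LieHyperalgebra.SData H n where
  t := N + 1
  σ := Equiv.refl _
  m _ := 1
  f := auxF N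
  h := auxH e a b
  p _ _ := 0
  q _ _ _ := 0
  lam i j _ _ := auxLam c i j
  σi := auxSigma N
  σi_fix := by
    intro i
    induction i using Fin.cases with
    | zero =>
      intro j hj
      have h1 : auxSigma N 0 = Equiv.refl _ := by simp [auxSigma]
      show auxSigma N 0 j = j
      rw [h1]; rfl
    | succ jdx =>
      intro j hj
      exfalso
      apply hj
      show auxH e a b jdx.succ j ∈ H.derivedSet (n - 1)
      have h1 : auxH e a b jdx.succ = ![a jdx, b jdx] := by simp [auxH]
      rw [h1]
      fin_cases j
      · simpa using ha jdx
      · simpa using hb jdx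
  σij _ _ := Equiv.refl _
  σijk _ _ _ := Equiv.refl _

end AuxPerfect

section AuxPerfect2

open LieHyperalgebra

variable {K L : Type*} [Field K] [LieRing L] [LieAlgebra K L] (H : LieHyperalgebra K L)
variable (n : ℕ) (e : L) {N : ℕ} (c : Fin (N + 1) → K) (a b : Fin (N + 1) → L)

private lemma auxData_g (ha : ∀ j, a j ∈ H.derivedSet (n - 1))
    (hb : ∀ j, b j ∈ H.derivedSet (n - 1))
    (hsmul : ∀ (t : K) (x : L), H.smul t x = {t • x}) (i : Fin (N + 2)) (j : Fin 2) :
    LieHyperalgebra.SData.g (auxData H n e c a b ha hb) i j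
      = {auxLam c i j • auxH e a b i j} := by
  have h1 : LieHyperalgebra.SData.g (auxData H n e c a b ha hb) i j
      = ⋃ cc ∈ ({auxLam c i j} : Set K), H.smul cc (auxH e a b i j) := rfl
  rw [h1, Set.biUnion_singleton, hsmul]

private lemma auxData_g' (ha : ∀ j, a j ∈ H.derivedSet (n - 1))
    (hb : ∀ j, b j ∈ H.derivedSet (n - 1))
    (hsmul : ∀ (t : K) (x : L), H.smul t x = {t • x}) (i : Fin (N + 2)) (j : Fin 2) :
    LieHyperalgebra.SData.g' (auxData H n e c a b ha hb) i j
      = {auxLam c i (auxSigma N i j) • auxH e a b i (auxSigma N i j)} := by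
  have h1 : LieHyperalgebra.SData.g' (auxData H n e c a b ha hb) i j
      = ⋃ cc ∈ ({auxLam c i (auxSigma N i j)} : Set K),
          H.smul cc (auxH e a b i (auxSigma N i j)) := rfl
  rw [h1, Set.biUnion_singleton, hsmul]

private lemma auxData_term_lhs (ha : ∀ j, a j ∈ H.derivedSet (n - 1))
    (hb : ∀ j, b j ∈ H.derivedSet (n - 1))
    (hsmul : ∀ (t : K) (x : L), H.smul t x = {t • x})
    (hbr : ∀ x y : L, H.bracket x y = {⁅x, y⁆}) (i : Fin (N + 2)) :
    H.evalBExpr ((auxData H n e c a b ha hb).f i)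
        (LieHyperalgebra.SData.g (auxData H n e c a b ha hb) i)
      = {Fin.cases (motive := fun _ => L) e (fun j => c j • ⁅a j, b j⁆) i} := by
  induction i using Fin.cases with
  | zero =>
    have hf0 : (auxData H n e c a b ha hb).f 0 = BExpr.leaf 0 := by
      show auxF N 0 = _; simp [auxF]; rfl
    erw [hf0]
    have h0 : H.evalBExpr (BExpr.leaf 0)
          (LieHyperalgebra.SData.g (auxData H n e c a b ha hb) 0)
        = LieHyperalgebra.SData.g (auxData H n e c a b ha hb) 0 0 := by simp [evalBExpr]
    erw [h0, auxData_g H n e c a b ha hb hsmul]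
    simp [auxLam, auxH]
    exact _root_.one_smul K e
  | succ jdx =>
    have hfs : (auxData H n e c a b ha hb).f jdx.succ
        = BExpr.br (BExpr.leaf 0) (BExpr.leaf 1) := by
      show auxF N jdx.succ = _; simp [auxF]; rfl
    erw [hfs]
    have h0 : H.evalBExpr (BExpr.br (BExpr.leaf 0) (BExpr.leaf 1))
          (LieHyperalgebra.SData.g (auxData H n e c a b ha hb) jdx.succ)
        = ext2 H.bracket (LieHyperalgebra.SData.g (auxData H n e c a b ha hb) jdx.succ 0)
            (LieHyperalgebra.SData.g (auxData H n e c a b ha hb) jdx.succ 1) := by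
      simp [evalBExpr]
    erw [h0, auxData_g H n e c a b ha hb hsmul, auxData_g H n e c a b ha hb hsmul,
      aux_ext2_pair, hbr]
    have hl0 : auxLam c jdx.succ 0 = c jdx := by simp [auxLam]
    have hl1 : auxLam c jdx.succ 1 = 1 := by simp [auxLam]
    have hh0 : auxH e a b jdx.succ 0 = a jdx := by simp [auxH]
    have hh1 : auxH e a b jdx.succ 1 = b jdx := by simp [auxH]
    erw [hl0, hl1, hh0, hh1, _root_.one_smul, smul_lie]
    simp

private lemma auxData_term_rhs (ha : ∀ j, a j ∈ H.derivedSet (n - 1))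
    (hb : ∀ j, b j ∈ H.derivedSet (n - 1))
    (hsmul : ∀ (t : K) (x : L), H.smul t x = {t • x})
    (hbr : ∀ x y : L, H.bracket x y = {⁅x, y⁆}) (i : Fin (N + 2)) :
    H.evalBExpr ((auxData H n e c a b ha hb).f ((auxData H n e c a b ha hb).σ i))
        (LieHyperalgebra.SData.g' (auxData H n e c a b ha hb) i)
      = {Fin.cases (motive := fun _ => L) e (fun j => -(c j • ⁅a j, b j⁆)) i} := by
  induction i using Fin.cases with
  | zero =>
    have hf0 : (auxData H n e c a b ha hb).f ((auxData H n e c a b ha hb).σ 0)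
        = BExpr.leaf 0 := by show auxF N 0 = _; simp [auxF]; rfl
    erw [hf0]
    have h0 : H.evalBExpr (BExpr.leaf 0)
          (LieHyperalgebra.SData.g' (auxData H n e c a b ha hb) 0)
        = LieHyperalgebra.SData.g' (auxData H n e c a b ha hb) 0 0 := by simp [evalBExpr]
    erw [h0, auxData_g' H n e c a b ha hb hsmul]
    have hs0 : auxSigma N 0 = Equiv.refl _ := by simp [auxSigma]
    erw [hs0]
    simp [auxLam, auxH]
    exact _root_.one_smul K e
  | succ jdx =>
    have hfs : (auxData H n e c a b ha hb).f ((auxData H n e c a b ha hb).σ jdx.succ)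
        = BExpr.br (BExpr.leaf 0) (BExpr.leaf 1) := by
      show auxF N jdx.succ = _; simp [auxF]; rfl
    erw [hfs]
    have h0 : H.evalBExpr (BExpr.br (BExpr.leaf 0) (BExpr.leaf 1))
          (LieHyperalgebra.SData.g' (auxData H n e c a b ha hb) jdx.succ)
        = ext2 H.bracket (LieHyperalgebra.SData.g' (auxData H n e c a b ha hb) jdx.succ 0)
            (LieHyperalgebra.SData.g' (auxData H n e c a b ha hb) jdx.succ 1) := by
      simp [evalBExpr]
    erw [h0, auxData_g' H n e c a b ha hb hsmul, auxData_g' H n e c a b ha hb hsmul,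
      aux_ext2_pair, hbr]
    have hs : auxSigma N jdx.succ = Equiv.swap 0 1 := by simp [auxSigma]
    erw [hs, Equiv.swap_apply_left, Equiv.swap_apply_right]
    have hl0 : auxLam c jdx.succ 0 = c jdx := by simp [auxLam]
    have hl1 : auxLam c jdx.succ 1 = 1 := by simp [auxLam]
    have hh0 : auxH e a b jdx.succ 0 = a jdx := by simp [auxH]
    have hh1 : auxH e a b jdx.succ 1 = b jdx := by simp [auxH]
    have hsk : ⁅b jdx, a jdx⁆ = -⁅a jdx, b jdx⁆ := (lie_skew _ _).symm
    erw [hl0, hl1, hh0, hh1, _root_.one_smul, lie_smul, hsk, smul_neg]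
    simp

private lemma auxData_lhs (ha : ∀ j, a j ∈ H.derivedSet (n - 1))
    (hb : ∀ j, b j ∈ H.derivedSet (n - 1))
    (hadd : ∀ x y : L, H.add x y = {x + y})
    (hsmul : ∀ (t : K) (x : L), H.smul t x = {t • x})
    (hbr : ∀ x y : L, H.bracket x y = {⁅x, y⁆}) :
    LieHyperalgebra.SData.lhs (auxData H n e c a b ha hb)
      = {e + ∑ j, c j • ⁅a j, b j⁆} := by
  have h1 : LieHyperalgebra.SData.lhs (auxData H n e c a b ha hb)
      = hsumSet H.add (fun i : Fin (N + 2) =>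
          H.evalBExpr ((auxData H n e c a b ha hb).f i)
            (LieHyperalgebra.SData.g (auxData H n e c a b ha hb) i)) := rfl
  rw [h1, aux_hsum_val hadd _ (Fin.cases e (fun j => c j • ⁅a j, b j⁆))
    (auxData_term_lhs H n e c a b ha hb hsmul hbr)]
  congr 1
  rw [Fin.sum_univ_succ]
  simp

private lemma auxData_rhs (ha : ∀ j, a j ∈ H.derivedSet (n - 1))
    (hb : ∀ j, b j ∈ H.derivedSet (n - 1))
    (hadd : ∀ x y : L, H.add x y = {x + y})
    (hsmul : ∀ (t : K) (x : L), H.smul t x = {t • x})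
    (hbr : ∀ x y : L, H.bracket x y = {⁅x, y⁆}) :
    LieHyperalgebra.SData.rhs (auxData H n e c a b ha hb)
      = {e - ∑ j, c j • ⁅a j, b j⁆} := by
  have h1 : LieHyperalgebra.SData.rhs (auxData H n e c a b ha hb)
      = hsumSet H.add (fun i : Fin (N + 2) =>
          H.evalBExpr ((auxData H n e c a b ha hb).f ((auxData H n e c a b ha hb).σ i))
            (LieHyperalgebra.SData.g' (auxData H n e c a b ha hb) i)) := rfl
  rw [h1, aux_hsum_val hadd _ (Fin.cases e (fun j => -(c j • ⁅a j, b j⁆)))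
    (auxData_term_rhs H n e c a b ha hb hsmul hbr)]
  congr 1
  rw [Fin.sum_univ_succ]
  simp [sub_eq_add_neg]

end AuxPerfect2

/-- Let `L` be a perfect Lie algebra over a field `K` of characteristic `≠ 2`, viewed as
a trivial Lie hyperalgebra (all hyperoperations are singletons).  Then the fundamental
relation `ℒ` is the diagonal (so `L/ℒ ≅ L`), while `𝒮ₙ* = L × L` for every `n ≥ 1`
(so `L/𝒮ₙ* = 0`), and consequently `𝒮 = ⋂ₙ 𝒮ₙ* = L × L` and `L/𝒮 = 0`. -/
theorem LieHyperalgebra.perfect_SRel_top {K L : Type*} [Field K] [LieRing L]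
    [LieAlgebra K L] (hcharK : (2 : K) ≠ 0) (H : LieHyperalgebra K L)
    (hadd : ∀ x y : L, H.add x y = {x + y})
    (hsmul : ∀ (a : K) (x : L), H.smul a x = {a • x})
    (hbr : ∀ x y : L, H.bracket x y = {⁅x, y⁆})
    (hfadd : ∀ a b : K, H.fadd a b = {a + b})
    (hfmul : ∀ a b : K, H.fmul a b = {a * b})
    (hz : H.zero = 0) (hfz : H.fzero = 0) (hfo : H.fone = 1)
    (hperfect : LieAlgebra.derivedSeries K L 1 = ⊤) :
    (∀ x y : L, H.LRel x y ↔ x = y) ∧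
    (∀ n : ℕ, 1 ≤ n → ∀ x y : L, Relation.TransGen (H.SRel n) x y) ∧
    (∀ x y : L, H.SInt x y) := by
  classical
  -- `0` lies in every derived set
  have hDzero : ∀ k, (0 : L) ∈ H.derivedSet k := by
    intro k
    induction k with
    | zero => trivial
    | succ k ih =>
      have hm : (0 : L) ∈ H.bracket 0 0 := by rw [hbr]; simp
      have h1 : H.derivedSet (k + 1) = ext2 H.bracket (H.derivedSet k) (H.derivedSet k) := rfl
      rw [h1]
      exact Set.mem_biUnion ih (Set.mem_biUnion ih hm)
  -- the span of every derived set is everything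
  have hDspan : ∀ k, Submodule.span K (H.derivedSet k) = ⊤ := by
    intro k
    induction k with
    | zero =>
      have h1 : H.derivedSet 0 = Set.univ := rfl
      rw [h1]
      exact Submodule.span_univ
    | succ k ih =>
      have h1 : H.derivedSet (k + 1)
          = {z : L | ∃ a ∈ H.derivedSet k, ∃ b ∈ H.derivedSet k, ⁅a, b⁆ = z} := by
        have h2 : H.derivedSet (k + 1) = ext2 H.bracket (H.derivedSet k) (H.derivedSet k) := rfl
        rw [h2]
        ext w
        constructor
        · intro hw
          simp only [ext2, Set.mem_iUnion, exists_prop] at hw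
          obtain ⟨u, hu, v, hv, hw⟩ := hw
          rw [hbr, Set.mem_singleton_iff] at hw
          exact ⟨u, hu, v, hv, hw.symm⟩
        · rintro ⟨u, hu, v, hv, rfl⟩
          refine Set.mem_biUnion hu (Set.mem_biUnion hv ?_)
          rw [hbr]
          exact rfl
      rw [h1]
      exact aux_span_brackets_eq_top hperfect _ ih
  -- every element is a linear combination of brackets of elements of `derivedSet k`
  have hrep : ∀ (k : ℕ) (z : L), ∃ (N : ℕ) (c : Fin (N + 1) → K) (a b : Fin (N + 1) → L),
      (∀ j, a j ∈ H.derivedSet k) ∧ (∀ j, b j ∈ H.derivedSet k) ∧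
        z = ∑ j, c j • ⁅a j, b j⁆ := by
    intro k z
    have hz : z ∈ Submodule.span K
        {w : L | ∃ a ∈ H.derivedSet k, ∃ b ∈ H.derivedSet k, ⁅a, b⁆ = w} := by
      rw [aux_span_brackets_eq_top hperfect _ (hDspan k)]
      trivial
    rw [Submodule.mem_span_set'] at hz
    obtain ⟨nn, f, g, hsum⟩ := hz
    choose u hu v hv huv using fun i => (g i).2
    refine ⟨nn, Fin.snoc (fun i => f i) 0, Fin.snoc u 0, Fin.snoc v 0, ?_, ?_, ?_⟩
    · intro j
      induction j using Fin.lastCases with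
      | last => rw [Fin.snoc_last]; exact hDzero k
      | cast i => rw [Fin.snoc_castSucc]; exact hu i
    · intro j
      induction j using Fin.lastCases with
      | last => rw [Fin.snoc_last]; exact hDzero k
      | cast i => rw [Fin.snoc_castSucc]; exact hv i
    · rw [Fin.sum_univ_castSucc]
      simp only [Fin.snoc_castSucc, Fin.snoc_last, _root_.zero_smul, add_zero]
      simp only [huv]
      exact hsum.symm
  -- singleton facts
  have hsingF : ∀ a b : K, ∃ cc, H.fadd a b = {cc} := fun a b => ⟨a + b, hfadd a b⟩
  have hsingM : ∀ a b : K, ∃ cc, H.fmul a b = {cc} := fun a b => ⟨a * b, hfmul a b⟩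
  have hsingBr : ∀ a b : L, ∃ cc, H.bracket a b = {cc} := fun a b => ⟨⁅a, b⁆, hbr a b⟩
  have hsingAdd : ∀ a b : L, ∃ cc, H.add a b = {cc} := fun a b => ⟨a + b, hadd a b⟩
  -- the fundamental relation is the diagonal
  have hLrel : ∀ x y : L, H.LRel x y ↔ x = y := by
    intro x y
    constructor
    · rintro ⟨d, hx, hy⟩
      have hG : ∀ i (j : Fin (d.m i + 1)), ∃ v, lG (H := H) d i j = {v} := by
        intro i j
        obtain ⟨cc, hcc⟩ := aux_hsum_sing hsingF _ (fun k => aux_hprod_sing hsingM _)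
        refine ⟨cc • d.h i j, ?_⟩
        have h1 : lG (H := H) d i j
            = ⋃ c2 ∈ hsumSet H.fadd (fun k => hprod H.fmul (d.lam i j k)),
                H.smul c2 (d.h i j) := rfl
        rw [h1, hcc, Set.biUnion_singleton, hsmul]
      have hE : ∀ i, ∃ v, H.evalBExpr (d.f i) (lG (H := H) d i) = {v} :=
        fun i => aux_eval_sing H hsingBr _ _ (hG i)
      obtain ⟨s, hs⟩ := aux_hsum_sing hsingAdd _ hE
      have h1 : lLhs (H := H) d
          = hsumSet H.add (fun i => H.evalBExpr (d.f i) (lG (H := H) d i)) := rfl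
      rw [h1, hs, Set.mem_singleton_iff] at hx hy
      rw [hx, hy]
    · rintro rfl
      have h2 : ∀ G : Fin 1 → Set L, H.evalBExpr (BExpr.leaf 0) G = G 0 := by
        intro G; simp [evalBExpr]
      have key : x ∈ lLhs (H := H) (⟨0, fun _ => 0, fun _ => BExpr.leaf 0, fun _ _ => x,
          fun _ _ => 0, fun _ _ _ => 0, fun _ _ _ _ => 1⟩ : LData K L) := by
        have h1 : lLhs (H := H) (⟨0, fun _ => 0, fun _ => BExpr.leaf 0, fun _ _ => x,
            fun _ _ => 0, fun _ _ _ => 0, fun _ _ _ _ => 1⟩ : LData K L)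
            = H.evalBExpr (BExpr.leaf 0) (lG (H := H) (⟨0, fun _ => 0, fun _ => BExpr.leaf 0,
                fun _ _ => x, fun _ _ => 0, fun _ _ _ => 0, fun _ _ _ _ => 1⟩ : LData K L) 0)
            := rfl
        have h3 : lG (H := H) (⟨0, fun _ => 0, fun _ => BExpr.leaf 0,
            fun _ _ => x, fun _ _ => 0, fun _ _ _ => 0, fun _ _ _ _ => 1⟩ : LData K L) 0 0
            = ⋃ c2 ∈ ({(1 : K)} : Set K), H.smul c2 x := rfl
        rw [h1, h2, h3, Set.biUnion_singleton, hsmul, _root_.one_smul]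
        exact rfl
      exact ⟨_, key, key⟩
  -- `S_n` relates everything
  have hmain : ∀ n : ℕ, 1 ≤ n → ∀ x y : L, H.SRel n x y := by
    intro n hn x y
    obtain ⟨N, c, a, b, ha, hb, hzrep⟩ := hrep (n - 1) ((2 : K)⁻¹ • (x - y))
    have h2 : (2 : K)⁻¹ * 2 = 1 := inv_mul_cancel₀ hcharK
    have hex : (2 : K)⁻¹ • (x + y) + ∑ j, c j • ⁅a j, b j⁆ = x := by
      rw [← hzrep, ← _root_.smul_add]
      have h3 : x + y + (x - y) = (2 : K) • x := by rw [two_smul]; abel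
      rw [h3, smul_smul, h2, _root_.one_smul]
    have hey : (2 : K)⁻¹ • (x + y) - ∑ j, c j • ⁅a j, b j⁆ = y := by
      rw [← hzrep, ← _root_.smul_sub]
      have h3 : x + y - (x - y) = (2 : K) • y := by rw [two_smul]; abel
      rw [h3, smul_smul, h2, _root_.one_smul]
    refine ⟨auxData H n ((2 : K)⁻¹ • (x + y)) c a b ha hb, ?_, ?_⟩
    · rw [auxData_lhs H n _ c a b ha hb hadd hsmul hbr, hex]
      exact rfl
    · rw [auxData_rhs H n _ c a b ha hb hadd hsmul hbr, hey]
      exact rfl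
  exact ⟨hLrel, fun n hn x y => Relation.TransGen.single (hmain n hn x y),
    fun x y n hn => Relation.TransGen.single (hmain n hn x y)⟩
end
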